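/- arXiv:1202.0037 — 6 statements merged into one kernel-verified Lean document; each statement's English description precedes it below -/
import Mathlib

section
/- Let a, b, c be reals with c ≠ 0, and let x₀ be a root of a² - 2bx + cx² = 0 such that the integrand is integrable on [0, x₀]. Define I(k) = ∫₀^{x₀} xᵏ dx/√(a² - 2bx + cx²) (as improper integrals, assumed to converge). Then for every natural number n ≥ 1: n·a²·I(n-1) = (2n+1)·b·I(n) - (n+1)·c·I(n+1). -/
open MeasureTheory intervalIntegral Set

theorem euler_moment_recursion (a b c x₀ : ℝ) (hc : c ≠ 0)
    (hroot : a ^ 2 - 2 * b * x₀ + c * x₀ ^ 2 = 0)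
    (hint : ∀ k : ℕ, IntervalIntegrable
      (fun x => x ^ k / Real.sqrt (a ^ 2 - 2 * b * x + c * x ^ 2))
      MeasureTheory.volume 0 x₀)
    (I : ℕ → ℝ)
    (hI : ∀ k : ℕ, I k = ∫ x in (0 : ℝ)..x₀, x ^ k / Real.sqrt (a ^ 2 - 2 * b * x + c * x ^ 2)) :
    ∀ n : ℕ, 1 ≤ n →
      (n : ℝ) * a ^ 2 * I (n - 1) = (2 * n + 1) * b * I n - (n + 1) * c * I (n + 1) := by
  intro n hn
  obtain ⟨m, rfl⟩ : ∃ m, n = m + 1 := ⟨n - 1, (Nat.succ_pred_eq_of_pos hn).symm⟩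
  set Q : ℝ → ℝ := fun x => a ^ 2 - 2 * b * x + c * x ^ 2 with hQ
  set g : ℝ → ℝ := fun x => x ^ (m + 1) * Real.sqrt (Q x) with hg
  set g' : ℝ → ℝ := fun x =>
    (((m : ℝ) + 1) * a ^ 2 * x ^ m - (2 * ((m : ℝ) + 1) + 1) * b * x ^ (m + 1)
      + (((m : ℝ) + 1) + 1) * c * x ^ (m + 2)) / Real.sqrt (Q x) with hg'
  -- pointwise decomposition of g'
  have hdecomp : ∀ x : ℝ, g' x =
      ((m : ℝ) + 1) * a ^ 2 * (x ^ m / Real.sqrt (Q x))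
        - (2 * ((m : ℝ) + 1) + 1) * b * (x ^ (m + 1) / Real.sqrt (Q x))
        + (((m : ℝ) + 1) + 1) * c * (x ^ (m + 2) / Real.sqrt (Q x)) := by
    intro x
    simp only [hg', sub_div, add_div, mul_div_assoc]
  -- Q is continuous
  have hQcont : Continuous Q := by fun_prop
  -- derivative of g off the zero set of Q
  have hderivAt : ∀ x : ℝ, Q x ≠ 0 → HasDerivAt g (g' x) x := by
    intro x hx
    rcases lt_or_gt_of_ne hx with hneg | hpos
    · -- Q x < 0 : g vanishes near x, g' x = 0
      have hsz : Real.sqrt (Q x) = 0 := Real.sqrt_eq_zero'.2 hneg.le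
      have hg'0 : g' x = 0 := by rw [hg']; simp [hsz]
      rw [hg'0]
      have hev : g =ᶠ[nhds x] fun _ => 0 := by
        have : ∀ᶠ y in nhds x, Q y < 0 :=
          hQcont.continuousAt.eventually_lt continuousAt_const hneg
        filter_upwards [this] with y hy
        have : Real.sqrt (Q y) = 0 := Real.sqrt_eq_zero'.2 hy.le
        simp [hg, this]
      exact (hasDerivAt_const x (0 : ℝ)).congr_of_eventuallyEq hev
    · -- Q x > 0
      have hQd : HasDerivAt Q (-(2 * b) + c * (2 * x)) x := by
        have h1 : HasDerivAt (fun y : ℝ => a ^ 2 - 2 * b * y + c * y ^ 2)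
            (0 - 2 * b * 1 + c * ((2 : ℕ) * x ^ (2 - 1))) x :=
          (((hasDerivAt_const x (a ^ 2)).sub
            ((hasDerivAt_id x).const_mul (2 * b))).add
            ((hasDerivAt_pow 2 x).const_mul c))
        convert h1 using 1
        push_cast
        ring
      have hsq : HasDerivAt (fun y => Real.sqrt (Q y))
          ((-(2 * b) + c * (2 * x)) / (2 * Real.sqrt (Q x))) x := hQd.sqrt hx
      have hprod := (hasDerivAt_pow (m + 1) x).mul hsq
      have hs0 : Real.sqrt (Q x) ≠ 0 := Real.sqrt_ne_zero'.2 hpos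
      have hs2 : Real.sqrt (Q x) ^ 2 = a ^ 2 - 2 * b * x + c * x ^ 2 := by
        simpa [hQ] using Real.sq_sqrt hpos.le
      refine HasDerivAt.congr_deriv hprod (Eq.symm ?_)
      have hm1 : m + 1 - 1 = m := rfl
      rw [hg', hm1]
      push_cast
      field_simp
      linear_combination (-((m : ℝ) + 1) * x ^ m) * hs2
  -- g' is interval integrable on 0..x₀
  have hcomb := (((hint m).const_mul (((m : ℝ) + 1) * a ^ 2)).sub
      ((hint (m + 1)).const_mul ((2 * ((m : ℝ) + 1) + 1) * b))).add
      ((hint (m + 2)).const_mul ((((m : ℝ) + 1) + 1) * c))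
  have hint' : IntervalIntegrable g' volume 0 x₀ := by
    apply hcomb.congr
    intro x _
    rw [hdecomp x]
  -- g is continuous
  have hgc : Continuous g := by
    exact (continuous_pow (m + 1)).mul (Real.continuous_sqrt.comp hQcont)
  -- factorization of Q: roots are x₀ and r
  set r : ℝ := 2 * b / c - x₀ with hr
  have hfact : ∀ x : ℝ, Q x = c * (x - x₀) * (x - r) := by
    intro x
    rw [hQ, hr]
    have h1 : a ^ 2 = 2 * b * x₀ - c * x₀ ^ 2 := by linarith
    field_simp
    linear_combination h1
  have hrootsonly : ∀ x : ℝ, Q x = 0 → x = x₀ ∨ x = r := by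
    intro x hx
    rw [hfact x] at hx
    rcases mul_eq_zero.1 hx with h | h
    · rcases mul_eq_zero.1 h with h | h
      · exact absurd h hc
      · exact Or.inl (sub_eq_zero.1 h)
    · exact Or.inr (sub_eq_zero.1 h)
  -- values of g at the special points
  have hg0 : g 0 = 0 := by simp [hg]
  have hgx₀ : g x₀ = 0 := by
    have : Q x₀ = 0 := hroot
    simp [hg, this]
  have hgr : g r = 0 := by
    have : Q r = 0 := by rw [hfact]; ring
    simp [hg, this]
  -- FTC on a subinterval free of roots of Q
  have ftc : ∀ u v : ℝ, uIcc u v ⊆ uIcc 0 x₀ →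
      (∀ x ∈ Ioo (min u v) (max u v), Q x ≠ 0) →
      (∫ x in u..v, g' x) = g v - g u := by
    intro u v hsub hroots
    exact integral_eq_sub_of_hasDeriv_right (hgc.continuousOn)
      (fun x hx => (hderivAt x (hroots x hx)).hasDerivWithinAt)
      (hint'.mono_set hsub)
  -- helper: endpoints are not in the open interval
  have hnotmemR : ∀ u t : ℝ, t ∉ Ioo (min u t) (max u t) := by
    intro u t ht
    rcases le_total u t with h | h
    · rw [max_eq_right h] at ht; exact lt_irrefl _ ht.2
    · rw [min_eq_right h] at ht; exact lt_irrefl _ ht.1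
  have hnotmemL : ∀ u t : ℝ, u ∉ Ioo (min u t) (max u t) := by
    intro u t ht
    rcases le_total u t with h | h
    · rw [min_eq_left h] at ht; exact lt_irrefl _ ht.1
    · rw [max_eq_left h] at ht; exact lt_irrefl _ ht.2
  -- the integral of g' over 0..x₀ vanishes
  have hzero : (∫ x in (0 : ℝ)..x₀, g' x) = 0 := by
    by_cases hrmem : r ∈ Ioo (min 0 x₀) (max 0 x₀)
    · -- split at r
      have hruIcc : r ∈ uIcc 0 x₀ := Ioo_subset_Icc_self hrmem
      have hsub1 : uIcc 0 r ⊆ uIcc 0 x₀ := uIcc_subset_uIcc left_mem_uIcc hruIcc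
      have hsub2 : uIcc r x₀ ⊆ uIcc 0 x₀ := uIcc_subset_uIcc hruIcc right_mem_uIcc
      have hIoo1 : Ioo (min 0 r) (max 0 r) ⊆ Ioo (min 0 x₀) (max 0 x₀) :=
        Ioo_subset_Ioo (le_min (min_le_left _ _) hrmem.1.le)
          (max_le (le_max_left _ _) hrmem.2.le)
      have hroots1 : ∀ x ∈ Ioo (min 0 r) (max 0 r), Q x ≠ 0 := by
        intro x hx hQx
        rcases hrootsonly x hQx with h | h
        · exact hnotmemR 0 x₀ (h ▸ hIoo1 hx)
        · exact hnotmemR 0 r (h ▸ hx)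
      have hroots2 : ∀ x ∈ Ioo (min r x₀) (max r x₀), Q x ≠ 0 := by
        intro x hx hQx
        rcases hrootsonly x hQx with h | h
        · exact hnotmemR r x₀ (h ▸ hx)
        · exact hnotmemL r x₀ (h ▸ hx)
      have h1 : (∫ x in (0 : ℝ)..r, g' x) = 0 := by
        rw [ftc 0 r hsub1 hroots1, hgr, hg0, sub_zero]
      have h2 : (∫ x in r..x₀, g' x) = 0 := by
        rw [ftc r x₀ hsub2 hroots2, hgx₀, hgr, sub_zero]
      rw [← integral_add_adjacent_intervals (hint'.mono_set hsub1) (hint'.mono_set hsub2),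
        h1, h2, add_zero]
    · have hroots0 : ∀ x ∈ Ioo (min 0 x₀) (max 0 x₀), Q x ≠ 0 := by
        intro x hx hQx
        rcases hrootsonly x hQx with h | h
        · exact hnotmemR 0 x₀ (h ▸ hx)
        · exact hrmem (h ▸ hx)
      rw [ftc 0 x₀ subset_rfl hroots0, hgx₀, hg0, sub_zero]
  -- expand the integral of g' as the moment combination
  have hsplit : (∫ x in (0 : ℝ)..x₀, g' x) =
      ((m : ℝ) + 1) * a ^ 2 * I m - (2 * ((m : ℝ) + 1) + 1) * b * I (m + 1)
        + (((m : ℝ) + 1) + 1) * c * I (m + 2) := by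
    rw [hI m, hI (m + 1), hI (m + 2)]
    rw [← intervalIntegral.integral_const_mul, ← intervalIntegral.integral_const_mul,
      ← intervalIntegral.integral_const_mul,
      ← intervalIntegral.integral_sub ((hint m).const_mul _) ((hint (m + 1)).const_mul _),
      ← intervalIntegral.integral_add (((hint m).const_mul _).sub ((hint (m + 1)).const_mul _))
        ((hint (m + 2)).const_mul _)]
    exact intervalIntegral.integral_congr (fun x _ => hdecomp x)
  have key := hsplit.symm.trans hzero
  have hsub : (m + 1) - 1 = m := rfl
  rw [hsub]
  push_cast
  linarith [key]
end

section
/- Let a, b, c be reals with c ≠ 0, x₀ a root of a² - 2bx + cx² = 0 with 0 < x₀, a > 0, and Δ = ∫₀^{x₀} dx/√(a² - 2bx + cx²) (convergent improper integral). Then ∫₀^{x₀} x dx/√(a² - 2bx + cx²) = (b/c)·Δ - a/c. -/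
open Set intervalIntegral

theorem euler_first_moment (a b c x₀ : ℝ) (hc : c ≠ 0) (ha : 0 < a) (hx₀ : 0 < x₀)
    (hroot : a ^ 2 - 2 * b * x₀ + c * x₀ ^ 2 = 0)
    (hint : ∀ k : ℕ, IntervalIntegrable
      (fun x => x ^ k / Real.sqrt (a ^ 2 - 2 * b * x + c * x ^ 2))
      MeasureTheory.volume 0 x₀)
    (Δ : ℝ)
    (hΔ : Δ = ∫ x in (0 : ℝ)..x₀, 1 / Real.sqrt (a ^ 2 - 2 * b * x + c * x ^ 2)) :
    ∫ x in (0 : ℝ)..x₀, x / Real.sqrt (a ^ 2 - 2 * b * x + c * x ^ 2)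
      = (b / c) * Δ - a / c := by
  set Q : ℝ → ℝ := fun x => a ^ 2 - 2 * b * x + c * x ^ 2 with hQdef
  set x₁ : ℝ := a ^ 2 / (c * x₀) with hx₁
  have hfact : ∀ x, Q x = c * (x - x₀) * (x - x₁) := by
    intro x
    simp only [hQdef, hx₁]
    field_simp
    linear_combination x * hroot
  -- find r
  obtain ⟨r, hr0, hrx₀, hQpos, hQnonpos, hQr⟩ :
      ∃ r, 0 < r ∧ r ≤ x₀ ∧ (∀ x ∈ Ico (0:ℝ) r, 0 < Q x) ∧ (∀ x ∈ Icc r x₀, Q x ≤ 0)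
        ∧ Q r = 0 := by
    rcases lt_or_gt_of_ne hc with hcneg | hcpos
    · refine ⟨x₀, hx₀, le_refl _, ?_, ?_, by rw [hfact]; ring⟩
      · intro x ⟨hx0, hxr⟩
        have hx₁neg : x₁ < 0 := by
          rw [hx₁]; apply div_neg_of_pos_of_neg (by positivity); nlinarith
        rw [hfact]
        have h := mul_pos (mul_pos_of_neg_of_neg hcneg (by linarith : x - x₀ < 0))
          (by linarith : 0 < x - x₁)
        linarith
      · intro x ⟨hx1, hx2⟩
        have : x = x₀ := le_antisymm hx2 hx1
        rw [this, hfact]; ring_nf; simp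
    · have hx₁pos : 0 < x₁ := by rw [hx₁]; positivity
      rcases le_or_gt x₀ x₁ with h01 | h01
      · refine ⟨x₀, hx₀, le_refl _, ?_, ?_, by rw [hfact]; ring⟩
        · intro x ⟨hx0, hxr⟩
          rw [hfact]
          have h := mul_pos_of_neg_of_neg (mul_neg_of_pos_of_neg hcpos
            (by linarith : x - x₀ < 0)) (by linarith : x - x₁ < 0)
          linarith
        · intro x ⟨hx1, hx2⟩
          have : x = x₀ := le_antisymm hx2 hx1
          rw [this, hfact]; ring_nf; simp
      · refine ⟨x₁, hx₁pos, h01.le, ?_, ?_, by rw [hfact]; ring⟩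
        · intro x ⟨hx0, hxr⟩
          rw [hfact]
          have h := mul_pos_of_neg_of_neg (mul_neg_of_pos_of_neg hcpos
            (by linarith : x - x₀ < 0)) (by linarith : x - x₁ < 0)
          linarith
        · intro x ⟨hx1, hx2⟩
          rw [hfact]
          have h := mul_nonneg (mul_nonneg hcpos.le (by linarith : (0:ℝ) ≤ x₀ - x))
            (by linarith : (0:ℝ) ≤ x - x₁)
          linarith
  -- tail integrals vanish
  have htail : ∀ f : ℝ → ℝ, (∫ x in r..x₀, f x / Real.sqrt (Q x)) = 0 := by
    intro f
    rw [intervalIntegral.integral_congr (g := fun _ => (0:ℝ)), intervalIntegral.integral_const,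
      smul_zero]
    intro x hx
    rw [uIcc_of_le hrx₀] at hx
    have := hQnonpos x hx
    simp [Real.sqrt_eq_zero_of_nonpos this]
  -- subset for integrability restriction
  have hsub : uIcc (0:ℝ) r ⊆ uIcc (0:ℝ) x₀ := by
    rw [uIcc_of_le hr0.le, uIcc_of_le hx₀.le]
    exact Icc_subset_Icc (le_refl _) hrx₀
  have h1' := hint 1
  simp only [pow_one] at h1'
  have h0' := hint 0
  simp only [pow_zero] at h0'
  have hI1 : IntervalIntegrable (fun x => x / Real.sqrt (Q x)) MeasureTheory.volume 0 r :=
    h1'.mono_set hsub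
  have hI0 : IntervalIntegrable (fun x => 1 / Real.sqrt (Q x)) MeasureTheory.volume 0 r :=
    h0'.mono_set hsub
  -- FTC
  have hFTC : (∫ x in (0:ℝ)..r, (c * x - b) / Real.sqrt (Q x)) = -a := by
    have hcontF : ContinuousOn (fun x => Real.sqrt (Q x)) (uIcc (0:ℝ) r) := by fun_prop
    have hderiv : ∀ x ∈ Ioo (0:ℝ) r,
        HasDerivAt (fun x => Real.sqrt (Q x)) ((c * x - b) / Real.sqrt (Q x)) x := by
      intro x hx
      have hQx : 0 < Q x := hQpos x ⟨hx.1.le, hx.2⟩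
      have hQd : HasDerivAt Q (2 * c * x - 2 * b) x := by
        have h2 := (((hasDerivAt_pow 2 x).const_mul c).const_add (a ^ 2)).sub
          ((hasDerivAt_id x).const_mul (2 * b))
        have h3 : Q = fun y : ℝ => a ^ 2 + c * y ^ 2 - 2 * b * id y := by
          funext y; simp [hQdef]; ring
        rw [h3]
        refine h2.congr_deriv ?_
        push_cast; ring
      have := (Real.hasDerivAt_sqrt hQx.ne').comp x hQd
      refine this.congr_deriv ?_
      have hs : Real.sqrt (Q x) ≠ 0 := (Real.sqrt_pos.mpr hQx).ne'
      field_simp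
    have hInt : IntervalIntegrable (fun x => (c * x - b) / Real.sqrt (Q x))
        MeasureTheory.volume 0 r := by
      have := (hI1.const_mul c).sub (hI0.const_mul b)
      refine this.congr ?_
      intro x _
      simp only
      ring
    have := intervalIntegral.integral_eq_sub_of_hasDerivAt_of_le hr0.le
      (by rwa [uIcc_of_le hr0.le] at hcontF) hderiv hInt
    rw [this, hQr, Real.sqrt_zero]
    have : Q 0 = a ^ 2 := by simp [hQdef]
    rw [this, Real.sqrt_sq ha.le]
    ring
  -- split integrals
  have hIsplit : ∀ f : ℝ → ℝ, IntervalIntegrable (fun x => f x / Real.sqrt (Q x))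
      MeasureTheory.volume 0 x₀ →
      (∫ x in (0:ℝ)..x₀, f x / Real.sqrt (Q x)) = ∫ x in (0:ℝ)..r, f x / Real.sqrt (Q x) := by
    intro f hf
    rw [← intervalIntegral.integral_add_adjacent_intervals (hf.mono_set hsub)
      (hf.mono_set (by rw [uIcc_of_le hrx₀, uIcc_of_le hx₀.le]; exact Icc_subset_Icc hr0.le (le_refl _))),
      htail f, add_zero]
  have hI1eq := hIsplit (fun x => x) h1'
  have hI0eq := hIsplit (fun x => 1) h0'
  -- combine
  have hcomb : c * (∫ x in (0:ℝ)..r, x / Real.sqrt (Q x))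
      - b * (∫ x in (0:ℝ)..r, 1 / Real.sqrt (Q x)) = -a := by
    rw [← intervalIntegral.integral_const_mul, ← intervalIntegral.integral_const_mul,
      ← intervalIntegral.integral_sub (hI1.const_mul c) (hI0.const_mul b)]
    rw [← hFTC]
    apply intervalIntegral.integral_congr
    intro x hx
    ring
  rw [hΔ, hI0eq, hI1eq]
  field_simp
  linarith
end

section
/- Under the same hypotheses (a, b, c real, c ≠ 0, x₀ a root of a² - 2bx + cx², Δ = ∫₀^{x₀} dx/√(a² - 2bx + cx²), integrals convergent), ∫₀^{x₀} x² dx/√(a² - 2bx + cx²) = ((3b² - a²c)/(2c²))·Δ - 3ab/(2c²). -/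
set_option maxHeartbeats 2000000 in
theorem euler_second_moment (a b c x₀ : ℝ) (hc : c ≠ 0) (ha : 0 < a) (hx₀ : 0 < x₀)
    (hroot : a ^ 2 - 2 * b * x₀ + c * x₀ ^ 2 = 0)
    (hint : ∀ k : ℕ, IntervalIntegrable
      (fun x => x ^ k / Real.sqrt (a ^ 2 - 2 * b * x + c * x ^ 2))
      MeasureTheory.volume 0 x₀)
    (Δ : ℝ)
    (hΔ : Δ = ∫ x in (0 : ℝ)..x₀, 1 / Real.sqrt (a ^ 2 - 2 * b * x + c * x ^ 2)) :
    ∫ x in (0 : ℝ)..x₀, x ^ 2 / Real.sqrt (a ^ 2 - 2 * b * x + c * x ^ 2)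
      = ((3 * b ^ 2 - a ^ 2 * c) / (2 * c ^ 2)) * Δ - 3 * a * b / (2 * c ^ 2) := by
  have hQcont : Continuous (fun x : ℝ => a ^ 2 - 2 * b * x + c * x ^ 2) := by continuity
  set S : Set ℝ := {x | x ∈ Set.Icc (0:ℝ) x₀ ∧ a ^ 2 - 2 * b * x + c * x ^ 2 = 0} with hS
  have hSne : S.Nonempty := ⟨x₀, ⟨hx₀.le, le_refl _⟩, hroot⟩
  have hSclosed : IsClosed S := by
    have hSeq : S = Set.Icc 0 x₀ ∩ (fun x => a ^ 2 - 2 * b * x + c * x ^ 2) ⁻¹' {0} := by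
      ext x; simp [hS]
    rw [hSeq]; exact isClosed_Icc.inter (isClosed_singleton.preimage hQcont)
  have hSbdd : BddBelow S := ⟨0, fun x hx => hx.1.1⟩
  set r := sInf S with hr
  have hrS : r ∈ S := hSclosed.csInf_mem hSne hSbdd
  have hr0 : 0 ≤ r := hrS.1.1
  have hrx₀ : r ≤ x₀ := hrS.1.2
  have hQr : a ^ 2 - 2 * b * r + c * r ^ 2 = 0 := hrS.2
  have hrpos : 0 < r := by
    rcases hr0.lt_or_eq with h | h
    · exact h
    · exfalso; rw [← h] at hQr; nlinarith
  -- positivity on [0, r)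
  have hQpos : ∀ x ∈ Set.Ico (0:ℝ) r, 0 < a ^ 2 - 2 * b * x + c * x ^ 2 := by
    intro x hx
    by_contra hcon
    push_neg at hcon
    have hiv := intermediate_value_Icc' hx.1 hQcont.continuousOn
    have h0mem : (0:ℝ) ∈ Set.Icc (a ^ 2 - 2 * b * x + c * x ^ 2)
        (a ^ 2 - 2 * b * 0 + c * 0 ^ 2) := by
      constructor
      · exact hcon
      · nlinarith
    obtain ⟨z, hz, hfz⟩ := hiv h0mem
    have hzS : z ∈ S := by
      refine ⟨⟨hz.1, ?_⟩, hfz⟩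
      exact le_trans hz.2 (le_trans hx.2.le hrx₀)
    have : r ≤ z := csInf_le hSbdd hzS
    linarith [hz.2, hx.2]
  have hsub : Set.uIcc (0:ℝ) r ⊆ Set.uIcc 0 x₀ := by
    rw [Set.uIcc_of_le hr0, Set.uIcc_of_le hx₀.le]
    exact Set.Icc_subset_Icc le_rfl hrx₀
  have hsub' : Set.uIcc r x₀ ⊆ Set.uIcc 0 x₀ := by
    rw [Set.uIcc_of_le hrx₀, Set.uIcc_of_le hx₀.le]
    exact Set.Icc_subset_Icc hr0 le_rfl
  have i0 : IntervalIntegrable (fun x => 1 / Real.sqrt (a ^ 2 - 2 * b * x + c * x ^ 2))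
      MeasureTheory.volume 0 r := by
    have := (hint 0).mono_set hsub; simpa using this
  have i1 : IntervalIntegrable (fun x => x / Real.sqrt (a ^ 2 - 2 * b * x + c * x ^ 2))
      MeasureTheory.volume 0 r := by
    have := (hint 1).mono_set hsub; simpa using this
  have i2 : IntervalIntegrable (fun x => x ^ 2 / Real.sqrt (a ^ 2 - 2 * b * x + c * x ^ 2))
      MeasureTheory.volume 0 r := (hint 2).mono_set hsub
  -- derivative of Q
  have hderivQ : ∀ x : ℝ, HasDerivAt (fun y => a ^ 2 - 2 * b * y + c * y ^ 2)
      (2 * c * x - 2 * b) x := by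
    intro x
    have h := ((hasDerivAt_const x (a ^ 2)).sub ((hasDerivAt_id x).const_mul (2 * b))).add
      ((hasDerivAt_pow 2 x).const_mul c)
    exact h.congr_deriv (by push_cast; ring)
  set J0 := ∫ x in (0:ℝ)..r, 1 / Real.sqrt (a ^ 2 - 2 * b * x + c * x ^ 2) with hJ0
  set J1 := ∫ x in (0:ℝ)..r, x / Real.sqrt (a ^ 2 - 2 * b * x + c * x ^ 2) with hJ1
  set J2 := ∫ x in (0:ℝ)..r, x ^ 2 / Real.sqrt (a ^ 2 - 2 * b * x + c * x ^ 2) with hJ2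
  -- FTC for k = 0
  have hFTC0 : (∫ x in (0:ℝ)..r, (c * x - b) / Real.sqrt (a ^ 2 - 2 * b * x + c * x ^ 2))
      = Real.sqrt (a ^ 2 - 2 * b * r + c * r ^ 2)
        - Real.sqrt (a ^ 2 - 2 * b * 0 + c * 0 ^ 2) := by
    apply intervalIntegral.integral_eq_sub_of_hasDeriv_right_of_le
      (f := fun y => Real.sqrt (a ^ 2 - 2 * b * y + c * y ^ 2)) hr0
    · exact (Real.continuous_sqrt.comp hQcont).continuousOn
    · intro x hx
      have hQx : 0 < a ^ 2 - 2 * b * x + c * x ^ 2 := hQpos x ⟨hx.1.le, hx.2⟩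
      have hs : Real.sqrt (a ^ 2 - 2 * b * x + c * x ^ 2) ≠ 0 :=
        ne_of_gt (Real.sqrt_pos.mpr hQx)
      have h := (hderivQ x).sqrt (ne_of_gt hQx)
      have heq : (2 * c * x - 2 * b) / (2 * Real.sqrt (a ^ 2 - 2 * b * x + c * x ^ 2))
          = (c * x - b) / Real.sqrt (a ^ 2 - 2 * b * x + c * x ^ 2) := by
        field_simp
      rw [heq] at h
      exact h.hasDerivWithinAt
    · have hfun : (fun x => (c * x - b) / Real.sqrt (a ^ 2 - 2 * b * x + c * x ^ 2))
          = (fun x => c * (x / Real.sqrt (a ^ 2 - 2 * b * x + c * x ^ 2))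
              - b * (1 / Real.sqrt (a ^ 2 - 2 * b * x + c * x ^ 2))) := by
        funext x; ring
      rw [hfun]
      exact (i1.const_mul c).sub (i0.const_mul b)
  have hE1 : c * J1 - b * J0 = -a := by
    rw [hJ0, hJ1, ← intervalIntegral.integral_const_mul, ← intervalIntegral.integral_const_mul,
      ← intervalIntegral.integral_sub (i1.const_mul c) (i0.const_mul b)]
    have hcongr : (∫ x in (0:ℝ)..r, (c * (x / Real.sqrt (a ^ 2 - 2 * b * x + c * x ^ 2))
        - b * (1 / Real.sqrt (a ^ 2 - 2 * b * x + c * x ^ 2))))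
        = ∫ x in (0:ℝ)..r, (c * x - b) / Real.sqrt (a ^ 2 - 2 * b * x + c * x ^ 2) :=
      intervalIntegral.integral_congr fun x _ => by ring
    rw [hcongr, hFTC0, hQr, Real.sqrt_zero,
      show a ^ 2 - 2 * b * 0 + c * 0 ^ 2 = a ^ 2 by ring, Real.sqrt_sq ha.le]
    ring
  -- FTC for k = 1
  have hFTC1 : (∫ x in (0:ℝ)..r,
        (a ^ 2 - 3 * b * x + 2 * c * x ^ 2) / Real.sqrt (a ^ 2 - 2 * b * x + c * x ^ 2))
      = r * Real.sqrt (a ^ 2 - 2 * b * r + c * r ^ 2)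
        - 0 * Real.sqrt (a ^ 2 - 2 * b * 0 + c * 0 ^ 2) := by
    apply intervalIntegral.integral_eq_sub_of_hasDeriv_right_of_le
      (f := fun y => y * Real.sqrt (a ^ 2 - 2 * b * y + c * y ^ 2)) hr0
    · exact (continuous_id.mul (Real.continuous_sqrt.comp hQcont)).continuousOn
    · intro x hx
      have hQx : 0 < a ^ 2 - 2 * b * x + c * x ^ 2 := hQpos x ⟨hx.1.le, hx.2⟩
      have hs : Real.sqrt (a ^ 2 - 2 * b * x + c * x ^ 2) ≠ 0 :=
        ne_of_gt (Real.sqrt_pos.mpr hQx)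
      have hsq : Real.sqrt (a ^ 2 - 2 * b * x + c * x ^ 2) ^ 2
          = a ^ 2 - 2 * b * x + c * x ^ 2 := Real.sq_sqrt hQx.le
      have h := (hasDerivAt_id x).mul ((hderivQ x).sqrt (ne_of_gt hQx))
      simp only [id_eq] at h
      have heq : 1 * Real.sqrt (a ^ 2 - 2 * b * x + c * x ^ 2)
          + x * ((2 * c * x - 2 * b) / (2 * Real.sqrt (a ^ 2 - 2 * b * x + c * x ^ 2)))
          = (a ^ 2 - 3 * b * x + 2 * c * x ^ 2)
            / Real.sqrt (a ^ 2 - 2 * b * x + c * x ^ 2) := by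
        generalize Real.sqrt (a ^ 2 - 2 * b * x + c * x ^ 2) = s at hs hsq ⊢
        field_simp
        linear_combination hsq
      rw [heq] at h
      exact h.hasDerivWithinAt
    · have hfun : (fun x => (a ^ 2 - 3 * b * x + 2 * c * x ^ 2)
            / Real.sqrt (a ^ 2 - 2 * b * x + c * x ^ 2))
          = (fun x => a ^ 2 * (1 / Real.sqrt (a ^ 2 - 2 * b * x + c * x ^ 2))
              - 3 * b * (x / Real.sqrt (a ^ 2 - 2 * b * x + c * x ^ 2))
              + 2 * c * (x ^ 2 / Real.sqrt (a ^ 2 - 2 * b * x + c * x ^ 2))) := by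
        funext x; ring
      rw [hfun]
      exact ((i0.const_mul (a ^ 2)).sub (i1.const_mul (3 * b))).add (i2.const_mul (2 * c))
  have hE2 : a ^ 2 * J0 - 3 * b * J1 + 2 * c * J2 = 0 := by
    rw [hJ0, hJ1, hJ2, ← intervalIntegral.integral_const_mul,
      ← intervalIntegral.integral_const_mul, ← intervalIntegral.integral_const_mul,
      ← intervalIntegral.integral_sub (i0.const_mul (a ^ 2)) (i1.const_mul (3 * b)),
      ← intervalIntegral.integral_add (((i0.const_mul (a ^ 2)).sub (i1.const_mul (3 * b))))
        (i2.const_mul (2 * c))]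
    have hcongr : (∫ x in (0:ℝ)..r,
        (a ^ 2 * (1 / Real.sqrt (a ^ 2 - 2 * b * x + c * x ^ 2))
          - 3 * b * (x / Real.sqrt (a ^ 2 - 2 * b * x + c * x ^ 2))
          + 2 * c * (x ^ 2 / Real.sqrt (a ^ 2 - 2 * b * x + c * x ^ 2))))
        = ∫ x in (0:ℝ)..r,
          (a ^ 2 - 3 * b * x + 2 * c * x ^ 2) / Real.sqrt (a ^ 2 - 2 * b * x + c * x ^ 2) :=
      intervalIntegral.integral_congr fun x _ => by ring
    rw [hcongr, hFTC1, hQr, Real.sqrt_zero]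
    ring
  -- integrals over [0, x₀] reduce to [0, r]
  have tailkey : ∀ g : ℝ → ℝ,
      IntervalIntegrable (fun x => g x / Real.sqrt (a ^ 2 - 2 * b * x + c * x ^ 2))
        MeasureTheory.volume 0 x₀ →
      (∫ x in (0:ℝ)..x₀, g x / Real.sqrt (a ^ 2 - 2 * b * x + c * x ^ 2))
        = ∫ x in (0:ℝ)..r, g x / Real.sqrt (a ^ 2 - 2 * b * x + c * x ^ 2) := by
    intro g hg
    rcases eq_or_lt_of_le hrx₀ with heq | hlt
    · rw [heq]
    · have h2b : 2 * b * (x₀ - r) = c * (x₀ + r) * (x₀ - r) := by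
        linear_combination hQr - hroot
      have h2b' : 2 * b = c * (x₀ + r) :=
        mul_right_cancel₀ (sub_ne_zero.mpr hlt.ne') h2b
      have ha2 : a ^ 2 = c * r * x₀ := by linear_combination hQr + r * h2b'
      have hcpos : 0 < c := by nlinarith [pow_pos ha 2, mul_pos hrpos hx₀]
      have hzero : Set.EqOn (fun x => g x / Real.sqrt (a ^ 2 - 2 * b * x + c * x ^ 2))
          (fun _ => (0:ℝ)) (Set.uIcc r x₀) := by
        intro x hx
        rw [Set.uIcc_of_le hrx₀] at hx
        have hfact : a ^ 2 - 2 * b * x + c * x ^ 2 = c * ((x - r) * (x - x₀)) := by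
          linear_combination ha2 - x * h2b'
        have hprod : (x - r) * (x - x₀) ≤ 0 :=
          mul_nonpos_of_nonneg_of_nonpos (by linarith [hx.1]) (by linarith [hx.2])
        have hQle : a ^ 2 - 2 * b * x + c * x ^ 2 ≤ 0 := by
          rw [hfact]; nlinarith
        simp only
        rw [Real.sqrt_eq_zero'.mpr (by linarith [hQle] : a ^ 2 - 2 * b * x + c * x ^ 2 ≤ 0),
          div_zero]
      have hadd := intervalIntegral.integral_add_adjacent_intervals
        (hg.mono_set hsub) (hg.mono_set hsub')
      rw [← hadd, intervalIntegral.integral_congr hzero]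
      simp
  have hI2 : (∫ x in (0:ℝ)..x₀, x ^ 2 / Real.sqrt (a ^ 2 - 2 * b * x + c * x ^ 2)) = J2 :=
    tailkey (fun x => x ^ 2) (hint 2)
  have hI0 : Δ = J0 := by
    rw [hΔ]
    exact tailkey (fun _ => 1) (by simpa using hint 0)
  rw [hI2, hI0]
  have hkey : 2 * c ^ 2 * J2 = (3 * b ^ 2 - a ^ 2 * c) * J0 - 3 * a * b := by
    linear_combination 3 * b * hE1 + c * hE2
  field_simp
  linear_combination hkey
end

section
/- Under the same hypotheses, ∫₀^{x₀} x³ dx/√(a² - 2bx + cx²) = (5b³/(2c³) - 3a²b/(2c²))·Δ - 5ab²/(2c³) + 2a³/(3c²). -/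
open MeasureTheory Set intervalIntegral

private lemma euler_sqrt_deriv (a b c x : ℝ) (h : 0 < a ^ 2 - 2 * b * x + c * x ^ 2) :
    HasDerivAt (fun y => Real.sqrt (a ^ 2 - 2 * b * y + c * y ^ 2))
      ((c * x - b) / Real.sqrt (a ^ 2 - 2 * b * x + c * x ^ 2)) x := by
  have h1 : HasDerivAt (fun y : ℝ => a ^ 2 - 2 * b * y + c * y ^ 2)
      (0 - 2 * b * 1 + c * (2 * x ^ 1)) x := by
    exact (((hasDerivAt_const x (a ^ 2)).sub ((hasDerivAt_id x).const_mul (2 * b))).add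
      ((hasDerivAt_pow 2 x).const_mul c))
  have h2 := (Real.hasDerivAt_sqrt h.ne').comp x h1
  refine h2.congr_deriv ?_
  have hs : Real.sqrt (a ^ 2 - 2 * b * x + c * x ^ 2) ≠ 0 := by positivity
  field_simp
  ring

private lemma euler_ftc (a b c x₀ : ℝ) (ha : 0 < a) (hx₀ : 0 < x₀)
    (hroot : a ^ 2 - 2 * b * x₀ + c * x₀ ^ 2 = 0) (n : ℕ) (p : ℝ → ℝ)
    (hder : ∀ x ∈ Ioo (0:ℝ) x₀, 0 < a ^ 2 - 2 * b * x + c * x ^ 2 →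
      HasDerivAt (fun y => y ^ n * Real.sqrt (a ^ 2 - 2 * b * y + c * y ^ 2))
        (p x / Real.sqrt (a ^ 2 - 2 * b * x + c * x ^ 2)) x)
    (hpint : IntervalIntegrable (fun x => p x / Real.sqrt (a ^ 2 - 2 * b * x + c * x ^ 2))
      volume 0 x₀) :
    ∫ x in (0:ℝ)..x₀, p x / Real.sqrt (a ^ 2 - 2 * b * x + c * x ^ 2)
      = -((0:ℝ) ^ n * a) := by
  set F : ℝ → ℝ := fun y => y ^ n * Real.sqrt (a ^ 2 - 2 * b * y + c * y ^ 2) with hF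
  have hQcont : Continuous fun y : ℝ => a ^ 2 - 2 * b * y + c * y ^ 2 := by continuity
  have hcont : ContinuousOn F (Icc 0 x₀) :=
    ((continuous_pow n).mul (Real.continuous_sqrt.comp hQcont)).continuousOn
  have hderiv : ∀ x ∈ Ioo (0:ℝ) x₀,
      HasDerivWithinAt F (p x / Real.sqrt (a ^ 2 - 2 * b * x + c * x ^ 2)) (Ioi x) x := by
    intro x hx
    rcases lt_trichotomy (0:ℝ) (a ^ 2 - 2 * b * x + c * x ^ 2) with hpos | heq | hneg
    · exact (hder x hx hpos).hasDerivWithinAt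
    · -- Q x = 0 : interior root; Q ≤ 0 to the right
      have hQx : a ^ 2 - 2 * b * x + c * x ^ 2 = 0 := heq.symm
      have hxne : x - x₀ ≠ 0 := sub_ne_zero.mpr (ne_of_lt hx.2)
      have h2b : c * (x + x₀) - 2 * b = 0 := by
        have hmul : (x - x₀) * (c * (x + x₀) - 2 * b) = 0 := by
          linear_combination hQx - hroot
        rcases mul_eq_zero.mp hmul with h | h
        · exact absurd h hxne
        · exact h
      have hcx : c * (x * x₀) = a ^ 2 := by linear_combination -hQx + x * h2b
      have hc0 : 0 < c := by nlinarith [mul_pos hx.1 hx₀, sq_nonneg a, ha]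
      have hzero : p x / Real.sqrt (a ^ 2 - 2 * b * x + c * x ^ 2) = 0 := by
        rw [hQx, Real.sqrt_zero, div_zero]
      rw [hzero]
      have hmem : Ioo x x₀ ∈ nhdsWithin x (Ioi x) :=
        Ioo_mem_nhdsGT_of_mem ⟨le_refl x, hx.2⟩
      have hev : F =ᶠ[nhdsWithin x (Ioi x)] fun _ => 0 := by
        refine Filter.eventually_of_mem hmem fun y hy => ?_
        have hQy : a ^ 2 - 2 * b * y + c * y ^ 2 = c * (y - x) * (y - x₀) := by
          linear_combination hQx + (y - x) * h2b
        have hneg' : a ^ 2 - 2 * b * y + c * y ^ 2 ≤ 0 := by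
          rw [hQy]
          exact mul_nonpos_iff.mpr (Or.inl ⟨mul_nonneg hc0.le (sub_pos.mpr hy.1).le,
            (sub_neg.mpr hy.2).le⟩)
        simp [hF, Real.sqrt_eq_zero_of_nonpos hneg']
      have hFx : F x = 0 := by simp [hF, hQx]
      exact (hasDerivWithinAt_const x (Ioi x) 0).congr_of_eventuallyEq hev hFx
    · -- Q x < 0 : F vanishes in a neighborhood
      have hzero : p x / Real.sqrt (a ^ 2 - 2 * b * x + c * x ^ 2) = 0 := by
        rw [Real.sqrt_eq_zero_of_nonpos hneg.le, div_zero]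
      rw [hzero]
      have hopen : IsOpen {y : ℝ | a ^ 2 - 2 * b * y + c * y ^ 2 < 0} :=
        isOpen_lt hQcont continuous_const
      have hmem : {y : ℝ | a ^ 2 - 2 * b * y + c * y ^ 2 < 0} ∈ nhds x :=
        hopen.mem_nhds hneg
      have hev : F =ᶠ[nhds x] fun _ => 0 :=
        Filter.eventually_of_mem hmem fun y hy =>
          by simp [hF, Real.sqrt_eq_zero_of_nonpos (le_of_lt hy)]
      exact ((hasDerivAt_const x (0:ℝ)).congr_of_eventuallyEq hev).hasDerivWithinAt
  have := integral_eq_sub_of_hasDeriv_right_of_le hx₀.le hcont hderiv hpint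
  rw [this]
  have h1 : F x₀ = 0 := by simp [hF, hroot]
  have h2 : F 0 = 0 ^ n * a := by
    simp [hF, Real.sqrt_sq ha.le]
  rw [h1, h2, zero_sub]

theorem euler_third_moment (a b c x₀ : ℝ) (hc : c ≠ 0) (ha : 0 < a) (hx₀ : 0 < x₀)
    (hroot : a ^ 2 - 2 * b * x₀ + c * x₀ ^ 2 = 0)
    (hint : ∀ k : ℕ, IntervalIntegrable
      (fun x => x ^ k / Real.sqrt (a ^ 2 - 2 * b * x + c * x ^ 2))
      MeasureTheory.volume 0 x₀)
    (Δ : ℝ)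
    (hΔ : Δ = ∫ x in (0 : ℝ)..x₀, 1 / Real.sqrt (a ^ 2 - 2 * b * x + c * x ^ 2)) :
    ∫ x in (0 : ℝ)..x₀, x ^ 3 / Real.sqrt (a ^ 2 - 2 * b * x + c * x ^ 2)
      = (5 * b ^ 3 / (2 * c ^ 3) - 3 * a ^ 2 * b / (2 * c ^ 2)) * Δ
        - 5 * a * b ^ 2 / (2 * c ^ 3) + 2 * a ^ 3 / (3 * c ^ 2) := by
  set S : ℝ → ℝ := fun x => Real.sqrt (a ^ 2 - 2 * b * x + c * x ^ 2) with hS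
  set I : ℕ → ℝ := fun k => ∫ x in (0:ℝ)..x₀, x ^ k / S x with hI
  -- rewrite Δ as I 0
  have hΔ0 : Δ = I 0 := by
    rw [hΔ, hI]
    simp
    rfl
  -- n = 0 : p x = c*x - b
  have A0 : ∫ x in (0:ℝ)..x₀, (c * x - b) / S x = -a := by
    have hd : ∀ x ∈ Ioo (0:ℝ) x₀, 0 < a ^ 2 - 2 * b * x + c * x ^ 2 →
        HasDerivAt (fun y => y ^ 0 * Real.sqrt (a ^ 2 - 2 * b * y + c * y ^ 2))
          ((c * x - b) / Real.sqrt (a ^ 2 - 2 * b * x + c * x ^ 2)) x := by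
      intro x _ hpos
      simpa using euler_sqrt_deriv a b c x hpos
    have hpi : IntervalIntegrable (fun x => (c * x - b) / S x) volume 0 x₀ := by
      have heq : (fun x => (c * x - b) / S x)
          = fun x => c * (x ^ 1 / S x) - b * (x ^ 0 / S x) := by
        funext x
        simp only [← mul_div_assoc, ← sub_div, ← add_div, div_eq_mul_inv]
        ring
      rw [heq]
      exact ((hint 1).const_mul c).sub ((hint 0).const_mul b)
    have := euler_ftc a b c x₀ ha hx₀ hroot 0 (fun x => c * x - b) hd hpi
    simpa using this
  -- n = 1 : p x = a^2 - 3*b*x + 2*c*x^2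
  have A1 : ∫ x in (0:ℝ)..x₀, (a ^ 2 - 3 * b * x + 2 * c * x ^ 2) / S x = 0 := by
    have hd : ∀ x ∈ Ioo (0:ℝ) x₀, 0 < a ^ 2 - 2 * b * x + c * x ^ 2 →
        HasDerivAt (fun y => y ^ 1 * Real.sqrt (a ^ 2 - 2 * b * y + c * y ^ 2))
          ((a ^ 2 - 3 * b * x + 2 * c * x ^ 2) / Real.sqrt (a ^ 2 - 2 * b * x + c * x ^ 2)) x := by
      intro x _ hpos
      have h := (hasDerivAt_pow 1 x).mul (euler_sqrt_deriv a b c x hpos)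
      refine h.congr_deriv ?_
      set s := Real.sqrt (a ^ 2 - 2 * b * x + c * x ^ 2) with hsdef
      have hs : s ≠ 0 := by rw [hsdef]; positivity
      have hs2 : s ^ 2 = a ^ 2 - 2 * b * x + c * x ^ 2 := Real.sq_sqrt hpos.le
      field_simp
      linear_combination hs2
    have hpi : IntervalIntegrable (fun x => (a ^ 2 - 3 * b * x + 2 * c * x ^ 2) / S x)
        volume 0 x₀ := by
      have heq : (fun x => (a ^ 2 - 3 * b * x + 2 * c * x ^ 2) / S x)
          = fun x => a ^ 2 * (x ^ 0 / S x) - 3 * b * (x ^ 1 / S x) + 2 * c * (x ^ 2 / S x) := by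
        funext x
        simp only [← mul_div_assoc, ← sub_div, ← add_div, div_eq_mul_inv]
        ring
      rw [heq]
      exact (((hint 0).const_mul (a ^ 2)).sub ((hint 1).const_mul (3 * b))).add
        ((hint 2).const_mul (2 * c))
    have := euler_ftc a b c x₀ ha hx₀ hroot 1 (fun x => a ^ 2 - 3 * b * x + 2 * c * x ^ 2) hd hpi
    simpa using this
  -- n = 2 : p x = 2*a^2*x - 5*b*x^2 + 3*c*x^3
  have A2 : ∫ x in (0:ℝ)..x₀, (2 * a ^ 2 * x - 5 * b * x ^ 2 + 3 * c * x ^ 3) / S x = 0 := by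
    have hd : ∀ x ∈ Ioo (0:ℝ) x₀, 0 < a ^ 2 - 2 * b * x + c * x ^ 2 →
        HasDerivAt (fun y => y ^ 2 * Real.sqrt (a ^ 2 - 2 * b * y + c * y ^ 2))
          ((2 * a ^ 2 * x - 5 * b * x ^ 2 + 3 * c * x ^ 3)
            / Real.sqrt (a ^ 2 - 2 * b * x + c * x ^ 2)) x := by
      intro x _ hpos
      have h := (hasDerivAt_pow 2 x).mul (euler_sqrt_deriv a b c x hpos)
      refine h.congr_deriv ?_
      set s := Real.sqrt (a ^ 2 - 2 * b * x + c * x ^ 2) with hsdef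
      have hs : s ≠ 0 := by rw [hsdef]; positivity
      have hs2 : s ^ 2 = a ^ 2 - 2 * b * x + c * x ^ 2 := Real.sq_sqrt hpos.le
      field_simp
      linear_combination (2 * x) * hs2
    have hpi : IntervalIntegrable (fun x => (2 * a ^ 2 * x - 5 * b * x ^ 2 + 3 * c * x ^ 3) / S x)
        volume 0 x₀ := by
      have heq : (fun x => (2 * a ^ 2 * x - 5 * b * x ^ 2 + 3 * c * x ^ 3) / S x)
          = fun x => 2 * a ^ 2 * (x ^ 1 / S x) - 5 * b * (x ^ 2 / S x)
              + 3 * c * (x ^ 3 / S x) := by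
        funext x
        simp only [← mul_div_assoc, ← sub_div, ← add_div, div_eq_mul_inv]
        ring
      rw [heq]
      exact (((hint 1).const_mul (2 * a ^ 2)).sub ((hint 2).const_mul (5 * b))).add
        ((hint 3).const_mul (3 * c))
    have := euler_ftc a b c x₀ ha hx₀ hroot 2
      (fun x => 2 * a ^ 2 * x - 5 * b * x ^ 2 + 3 * c * x ^ 3) hd hpi
    simpa using this
  -- turn A0, A1, A2 into linear relations between moments
  have e1 : c * I 1 - b * I 0 = -a := by
    have heq : (fun x => (c * x - b) / S x)
        = fun x => c * (x ^ 1 / S x) - b * (x ^ 0 / S x) := by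
      funext x
      simp only [← mul_div_assoc, ← sub_div, ← add_div, div_eq_mul_inv]
      ring
    rw [heq] at A0
    rw [intervalIntegral.integral_sub ((hint 1).const_mul c) ((hint 0).const_mul b),
      intervalIntegral.integral_const_mul, intervalIntegral.integral_const_mul] at A0
    exact A0
  have e2 : a ^ 2 * I 0 - 3 * b * I 1 + 2 * c * I 2 = 0 := by
    have heq : (fun x => (a ^ 2 - 3 * b * x + 2 * c * x ^ 2) / S x)
        = fun x => a ^ 2 * (x ^ 0 / S x) - 3 * b * (x ^ 1 / S x) + 2 * c * (x ^ 2 / S x) := by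
      funext x
      simp only [← mul_div_assoc, ← sub_div, ← add_div, div_eq_mul_inv]
      ring
    rw [heq] at A1
    rw [intervalIntegral.integral_add
        (((hint 0).const_mul (a ^ 2)).sub ((hint 1).const_mul (3 * b)))
        ((hint 2).const_mul (2 * c)),
      intervalIntegral.integral_sub ((hint 0).const_mul (a ^ 2)) ((hint 1).const_mul (3 * b)),
      intervalIntegral.integral_const_mul, intervalIntegral.integral_const_mul,
      intervalIntegral.integral_const_mul] at A1
    exact A1
  have e3 : 2 * a ^ 2 * I 1 - 5 * b * I 2 + 3 * c * I 3 = 0 := by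
    have heq : (fun x => (2 * a ^ 2 * x - 5 * b * x ^ 2 + 3 * c * x ^ 3) / S x)
        = fun x => 2 * a ^ 2 * (x ^ 1 / S x) - 5 * b * (x ^ 2 / S x) + 3 * c * (x ^ 3 / S x) := by
      funext x
      simp only [← mul_div_assoc, ← sub_div, ← add_div, div_eq_mul_inv]
      ring
    rw [heq] at A2
    rw [intervalIntegral.integral_add
        (((hint 1).const_mul (2 * a ^ 2)).sub ((hint 2).const_mul (5 * b)))
        ((hint 3).const_mul (3 * c)),
      intervalIntegral.integral_sub ((hint 1).const_mul (2 * a ^ 2)) ((hint 2).const_mul (5 * b)),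
      intervalIntegral.integral_const_mul, intervalIntegral.integral_const_mul,
      intervalIntegral.integral_const_mul] at A2
    exact A2
  have hgoal : (∫ x in (0:ℝ)..x₀, x ^ 3 / Real.sqrt (a ^ 2 - 2 * b * x + c * x ^ 2)) = I 3 := rfl
  rw [hgoal, hΔ0]
  have key : 6 * c ^ 3 * I 3 = (15 * b ^ 3 - 9 * a ^ 2 * b * c) * I 0 - 15 * a * b ^ 2 * c ^ 0
      + 4 * a ^ 3 * c := by
    linear_combination (2 * c ^ 2) * e3 + (5 * b * c) * e2 + (15 * b ^ 2 - 4 * a ^ 2 * c) * e1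
  have h6 : (6:ℝ) * c ^ 3 ≠ 0 := mul_ne_zero (by norm_num) (pow_ne_zero 3 hc)
  apply mul_left_cancel₀ h6
  rw [key]
  field_simp
  ring
end

section
/- Under the same hypotheses, ∫₀^{x₀} x⁴ dx/√(a² - 2bx + cx²) = (35b⁴/(8c⁴) - 15a²b²/(4c³) + 3a⁴/(8c²))·Δ - 35ab³/(8c⁴) + 55a³b/(24c³). -/
set_option maxHeartbeats 1000000 in
theorem euler_fourth_moment (a b c x₀ : ℝ) (hc : c ≠ 0) (ha : 0 < a) (hx₀ : 0 < x₀)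
    (hroot : a ^ 2 - 2 * b * x₀ + c * x₀ ^ 2 = 0)
    (hint : ∀ k : ℕ, IntervalIntegrable
      (fun x => x ^ k / Real.sqrt (a ^ 2 - 2 * b * x + c * x ^ 2))
      MeasureTheory.volume 0 x₀)
    (Δ : ℝ)
    (hΔ : Δ = ∫ x in (0 : ℝ)..x₀, 1 / Real.sqrt (a ^ 2 - 2 * b * x + c * x ^ 2)) :
    ∫ x in (0 : ℝ)..x₀, x ^ 4 / Real.sqrt (a ^ 2 - 2 * b * x + c * x ^ 2)
      = (35 * b ^ 4 / (8 * c ^ 4) - 15 * a ^ 2 * b ^ 2 / (4 * c ^ 3) + 3 * a ^ 4 / (8 * c ^ 2)) * Δ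
        - 35 * a * b ^ 3 / (8 * c ^ 4) + 55 * a ^ 3 * b / (24 * c ^ 3) := by
  have hQcont : Continuous fun x : ℝ => a ^ 2 - 2 * b * x + c * x ^ 2 := by fun_prop
  set S : Set ℝ := Set.Icc (0:ℝ) x₀ ∩ (fun x => a ^ 2 - 2 * b * x + c * x ^ 2) ⁻¹' {0} with hS
  have hSne : S.Nonempty := ⟨x₀, ⟨hx₀.le, le_refl _⟩, by simpa using hroot⟩
  have hSbdd : BddBelow S := ⟨0, fun y hy => hy.1.1⟩
  have hSclosed : IsClosed S := isClosed_Icc.inter (isClosed_singleton.preimage hQcont)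
  set s := sInf S with hsdef
  have hsmem : s ∈ S := hSclosed.csInf_mem hSne hSbdd
  have hs01 : 0 ≤ s := hsmem.1.1
  have hsx₀ : s ≤ x₀ := hsmem.1.2
  have hQs : a ^ 2 - 2 * b * s + c * s ^ 2 = 0 := hsmem.2
  have hs0 : 0 < s := by
    rcases hs01.lt_or_eq with h | h
    · exact h
    · exfalso; rw [← h] at hQs; nlinarith
  have hpos : ∀ x ∈ Set.Ico (0:ℝ) s, 0 < a ^ 2 - 2 * b * x + c * x ^ 2 := by
    intro x hx
    by_contra hle
    push_neg at hle
    have hx0 : (0:ℝ) ≤ x := hx.1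
    have hIVT := intermediate_value_Icc' hx0 hQcont.continuousOn
    have h0mem : (0:ℝ) ∈ Set.Icc (a ^ 2 - 2 * b * x + c * x ^ 2)
        (a ^ 2 - 2 * b * 0 + c * 0 ^ 2) := ⟨hle, by nlinarith⟩
    obtain ⟨y, hy, hQy⟩ := hIVT h0mem
    have hymem : y ∈ S := ⟨⟨hy.1, le_trans hy.2 (le_trans hx.2.le hsx₀)⟩, hQy⟩
    have := csInf_le hSbdd hymem
    have hys : y ≤ x := hy.2
    have hxs : x < s := hx.2
    linarith
  have hneg : ∀ x, s ≤ x → x ≤ x₀ → a ^ 2 - 2 * b * x + c * x ^ 2 ≤ 0 := by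
    intro x hsx hxx₀
    rcases eq_or_lt_of_le hsx with rfl | hlt
    · exact le_of_eq hQs
    · have hsltx₀ : s < x₀ := lt_of_lt_of_le hlt hxx₀
      have h2b : (s - x₀) * (c * (s + x₀) - 2 * b) = 0 := by linear_combination hQs - hroot
      have h2b' : c * (s + x₀) - 2 * b = 0 := by
        rcases mul_eq_zero.mp h2b with h | h
        · exact absurd h (sub_ne_zero.mpr hsltx₀.ne)
        · exact h
      have hcsx : c * (s * x₀) = a ^ 2 := by linear_combination s * h2b' - hQs
      have hcpos : 0 < c := by nlinarith [mul_pos hs0 hx₀]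
      have hfac : a ^ 2 - 2 * b * x + c * x ^ 2 = c * (x - s) * (x - x₀) := by
        linear_combination x * h2b' - hcsx
      rw [hfac]
      have h1 : 0 ≤ c * (x - s) := mul_nonneg hcpos.le (by linarith)
      nlinarith
  have hii : ∀ k : ℕ, IntervalIntegrable
      (fun x => x ^ k / Real.sqrt (a ^ 2 - 2 * b * x + c * x ^ 2))
      MeasureTheory.volume 0 s := by
    intro k
    refine (hint k).mono_set (Set.uIcc_subset_uIcc Set.left_mem_uIcc ?_)
    rw [Set.uIcc_of_le hx₀.le]
    exact ⟨hs01, hsx₀⟩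
  have hii2 : ∀ k : ℕ, IntervalIntegrable
      (fun x => x ^ k / Real.sqrt (a ^ 2 - 2 * b * x + c * x ^ 2))
      MeasureTheory.volume s x₀ := by
    intro k
    refine (hint k).mono_set (Set.uIcc_subset_uIcc ?_ Set.right_mem_uIcc)
    rw [Set.uIcc_of_le hx₀.le]
    exact ⟨hs01, hsx₀⟩
  have htail : ∀ k : ℕ,
      (∫ x in s..x₀, x ^ k / Real.sqrt (a ^ 2 - 2 * b * x + c * x ^ 2)) = 0 := by
    intro k
    have heqon : Set.EqOn (fun x => x ^ k / Real.sqrt (a ^ 2 - 2 * b * x + c * x ^ 2))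
        (fun _ => (0:ℝ)) (Set.uIcc s x₀) := by
      intro x hx
      rw [Set.uIcc_of_le hsx₀] at hx
      have hQle : a ^ 2 - 2 * b * x + c * x ^ 2 ≤ 0 := hneg x hx.1 hx.2
      simp [Real.sqrt_eq_zero'.mpr hQle]
    rw [intervalIntegral.integral_congr heqon, intervalIntegral.integral_zero]
  have hsplit : ∀ k : ℕ,
      (∫ x in (0:ℝ)..x₀, x ^ k / Real.sqrt (a ^ 2 - 2 * b * x + c * x ^ 2))
      = ∫ x in (0:ℝ)..s, x ^ k / Real.sqrt (a ^ 2 - 2 * b * x + c * x ^ 2) := by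
    intro k
    rw [← intervalIntegral.integral_add_adjacent_intervals (hii k) (hii2 k), htail k, add_zero]
  -- FTC recurrence
  have hftc : ∀ m : ℕ,
      (∫ x in (0:ℝ)..s, ((m:ℝ) * a ^ 2 * (x ^ (m-1) / Real.sqrt (a ^ 2 - 2 * b * x + c * x ^ 2))
        - (2 * (m:ℝ) + 1) * b * (x ^ m / Real.sqrt (a ^ 2 - 2 * b * x + c * x ^ 2))
        + ((m:ℝ) + 1) * c * (x ^ (m+1) / Real.sqrt (a ^ 2 - 2 * b * x + c * x ^ 2))))
        = - ((0:ℝ) ^ m * a) := by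
    intro m
    have key := intervalIntegral.integral_eq_sub_of_hasDeriv_right_of_le (a := (0:ℝ)) (b := s)
      (f := fun x => x ^ m * Real.sqrt (a ^ 2 - 2 * b * x + c * x ^ 2))
      (f' := fun x => (m:ℝ) * a ^ 2 * (x ^ (m-1) / Real.sqrt (a ^ 2 - 2 * b * x + c * x ^ 2))
        - (2 * (m:ℝ) + 1) * b * (x ^ m / Real.sqrt (a ^ 2 - 2 * b * x + c * x ^ 2))
        + ((m:ℝ) + 1) * c * (x ^ (m+1) / Real.sqrt (a ^ 2 - 2 * b * x + c * x ^ 2)))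
      hs0.le
      (by
        apply Continuous.continuousOn
        fun_prop)
      (fun x hx => by
        have hQx : 0 < a ^ 2 - 2 * b * x + c * x ^ 2 := hpos x ⟨hx.1.le, hx.2⟩
        have hQ' : HasDerivAt (fun y : ℝ => a ^ 2 - 2 * b * y + c * y ^ 2)
            (2 * c * x - 2 * b) x := by
          have h1 := ((hasDerivAt_pow 2 x).const_mul c)
          have h2 := (hasDerivAt_id x).const_mul (2*b)
          have h3 := ((hasDerivAt_const x (a^2)).sub h2).add h1
          refine h3.congr_deriv ?_
          simp; ring
        have hsq := hQ'.sqrt hQx.ne'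
        have hg := (hasDerivAt_pow m x).mul hsq
        have hsne : Real.sqrt (a ^ 2 - 2 * b * x + c * x ^ 2) ≠ 0 :=
          (Real.sqrt_pos.mpr hQx).ne'
        have hmul : Real.sqrt (a ^ 2 - 2 * b * x + c * x ^ 2)
            * Real.sqrt (a ^ 2 - 2 * b * x + c * x ^ 2) = a ^ 2 - 2 * b * x + c * x ^ 2 :=
          Real.mul_self_sqrt hQx.le
        have heq : ((m:ℝ) * x ^ (m - 1) * Real.sqrt (a ^ 2 - 2 * b * x + c * x ^ 2)
            + x ^ m * ((2 * c * x - 2 * b) / (2 * Real.sqrt (a ^ 2 - 2 * b * x + c * x ^ 2))))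
            = (m:ℝ) * a ^ 2 * (x ^ (m-1) / Real.sqrt (a ^ 2 - 2 * b * x + c * x ^ 2))
              - (2 * (m:ℝ) + 1) * b * (x ^ m / Real.sqrt (a ^ 2 - 2 * b * x + c * x ^ 2))
              + ((m:ℝ) + 1) * c * (x ^ (m+1) / Real.sqrt (a ^ 2 - 2 * b * x + c * x ^ 2)) := by
          generalize Real.sqrt (a ^ 2 - 2 * b * x + c * x ^ 2) = r at hsne hmul ⊢
          rcases m with _ | k
          · push_cast
            field_simp
            ring
          · simp only [Nat.add_sub_cancel, pow_succ]
            push_cast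
            field_simp
            linear_combination (((k:ℝ) + 1) * x ^ k) * hmul
        have hgd := hg.hasDerivWithinAt (s := Set.Ioi x)
        rw [heq] at hgd
        exact hgd)
      (by
        apply IntervalIntegrable.add
        apply IntervalIntegrable.sub
        · exact (hii (m-1)).const_mul _
        · exact (hii m).const_mul _
        · exact (hii (m+1)).const_mul _)
    rw [key]
    show s ^ m * Real.sqrt (a ^ 2 - 2 * b * s + c * s ^ 2)
      - 0 ^ m * Real.sqrt (a ^ 2 - 2 * b * 0 + c * 0 ^ 2) = -((0:ℝ) ^ m * a)
    rw [hQs]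
    norm_num [Real.sqrt_sq ha.le]
  -- expand into linear equations
  have hexp : ∀ m : ℕ,
      (m:ℝ) * a ^ 2 * (∫ x in (0:ℝ)..s, x ^ (m-1) / Real.sqrt (a ^ 2 - 2 * b * x + c * x ^ 2))
      - (2 * (m:ℝ) + 1) * b * (∫ x in (0:ℝ)..s, x ^ m / Real.sqrt (a ^ 2 - 2 * b * x + c * x ^ 2))
      + ((m:ℝ) + 1) * c * (∫ x in (0:ℝ)..s, x ^ (m+1) / Real.sqrt (a ^ 2 - 2 * b * x + c * x ^ 2))
      = - ((0:ℝ) ^ m * a) := by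
    intro m
    have em := hftc m
    rw [intervalIntegral.integral_add (((hii (m-1)).const_mul _).sub ((hii m).const_mul _))
        ((hii (m+1)).const_mul _),
      intervalIntegral.integral_sub ((hii (m-1)).const_mul _) ((hii m).const_mul _),
      intervalIntegral.integral_const_mul, intervalIntegral.integral_const_mul,
      intervalIntegral.integral_const_mul] at em
    exact em
  have h01 : (∫ x in (0:ℝ)..x₀, 1 / Real.sqrt (a ^ 2 - 2 * b * x + c * x ^ 2))
      = ∫ x in (0:ℝ)..x₀, x ^ 0 / Real.sqrt (a ^ 2 - 2 * b * x + c * x ^ 2) :=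
    intervalIntegral.integral_congr (fun x _ => by norm_num)
  have h02 : (∫ x in (0:ℝ)..s, x ^ 0 / Real.sqrt (a ^ 2 - 2 * b * x + c * x ^ 2))
      = ∫ x in (0:ℝ)..s, (Real.sqrt (a ^ 2 - 2 * b * x + c * x ^ 2))⁻¹ :=
    intervalIntegral.integral_congr (fun x _ => by norm_num)
  have hΔ0 : (∫ x in (0:ℝ)..s, (Real.sqrt (a ^ 2 - 2 * b * x + c * x ^ 2))⁻¹) = Δ := by
    rw [hΔ, h01, hsplit 0, h02]
  have e0 := hexp 0
  have e1 := hexp 1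
  have e2 := hexp 2
  have e3 := hexp 3
  norm_num at e0 e1 e2 e3
  rw [hΔ0] at e0 e1
  have g1 : (∫ x in (0:ℝ)..s, x / Real.sqrt (a ^ 2 - 2 * b * x + c * x ^ 2))
      = (b * Δ - a) / c := by
    rw [eq_div_iff hc]
    linear_combination e0
  have g2 : (∫ x in (0:ℝ)..s, x ^ 2 / Real.sqrt (a ^ 2 - 2 * b * x + c * x ^ 2))
      = (3 * b * (∫ x in (0:ℝ)..s, x / Real.sqrt (a ^ 2 - 2 * b * x + c * x ^ 2))
          - a ^ 2 * Δ) / (2 * c) := by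
    rw [eq_div_iff (mul_ne_zero two_ne_zero hc)]
    linear_combination e1
  have g3 : (∫ x in (0:ℝ)..s, x ^ 3 / Real.sqrt (a ^ 2 - 2 * b * x + c * x ^ 2))
      = (5 * b * (∫ x in (0:ℝ)..s, x ^ 2 / Real.sqrt (a ^ 2 - 2 * b * x + c * x ^ 2))
          - 2 * a ^ 2 * (∫ x in (0:ℝ)..s, x / Real.sqrt (a ^ 2 - 2 * b * x + c * x ^ 2)))
          / (3 * c) := by
    rw [eq_div_iff (mul_ne_zero three_ne_zero hc)]
    linear_combination e2
  have g4 : (∫ x in (0:ℝ)..s, x ^ 4 / Real.sqrt (a ^ 2 - 2 * b * x + c * x ^ 2))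
      = (7 * b * (∫ x in (0:ℝ)..s, x ^ 3 / Real.sqrt (a ^ 2 - 2 * b * x + c * x ^ 2))
          - 3 * a ^ 2 * (∫ x in (0:ℝ)..s, x ^ 2 / Real.sqrt (a ^ 2 - 2 * b * x + c * x ^ 2)))
          / (4 * c) := by
    rw [eq_div_iff (mul_ne_zero four_ne_zero hc)]
    linear_combination e3
  rw [hsplit 4, g4, g3, g2, g1]
  field_simp
  ring
end

section
/- With the convergent sequences P_k, Q_k defined by P₁ = 0, Q₁ = 1, P₂ = 2m, Q₂ = n, P_{k+2} = (2k+1)n·P_{k+1} - k²m²·P_k, Q_{k+2} = (2k+1)n·Q_{k+1} - k²m²·Q_k, one has for all k ≥ 1: P_{k+1}·Q_k - P_k·Q_{k+1} = 2·((k-1)!)²·m^{2k-1}. -/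
theorem euler_log_convergents_determinant (m n : ℝ) (P Q : ℕ → ℝ)
    (hP1 : P 1 = 0) (hQ1 : Q 1 = 1) (hP2 : P 2 = 2 * m) (hQ2 : Q 2 = n)
    (hPrec : ∀ k : ℕ, 1 ≤ k → P (k + 2) = (2 * k + 1) * n * P (k + 1) - k ^ 2 * m ^ 2 * P k)
    (hQrec : ∀ k : ℕ, 1 ≤ k → Q (k + 2) = (2 * k + 1) * n * Q (k + 1) - k ^ 2 * m ^ 2 * Q k) :
    ∀ k : ℕ, 1 ≤ k →
      P (k + 1) * Q k - P k * Q (k + 1) = 2 * ((Nat.factorial (k - 1) : ℝ)) ^ 2 * m ^ (2 * k - 1) := by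
  intro k hk
  induction k with
  | zero => omega
  | succ j ih =>
    rcases Nat.eq_or_lt_of_le hk with h1 | h1
    · simp [← h1, hP1, hQ1, hP2, hQ2, Nat.factorial]
    · have hj : 1 ≤ j := by omega
      have ihj := ih hj
      have hPr := hPrec j hj
      have hQr := hQrec j hj
      have hsub : j + 1 - 1 = (j - 1) + 1 := by omega
      have hfac : (Nat.factorial (j + 1 - 1) : ℝ) = j * Nat.factorial (j - 1) := by
        rw [hsub, Nat.factorial_succ]
        push_cast [Nat.cast_sub hj]
        ring
      have hpow : 2 * (j + 1) - 1 = (2 * j - 1) + 2 := by omega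
      calc P (j + 1 + 1) * Q (j + 1) - P (j + 1) * Q (j + 1 + 1)
          = (j : ℝ) ^ 2 * m ^ 2 * (P (j + 1) * Q j - P j * Q (j + 1)) := by
            rw [show j + 1 + 1 = j + 2 from rfl, hPr, hQr]; ring
        _ = 2 * ((Nat.factorial (j + 1 - 1) : ℝ)) ^ 2 * m ^ (2 * (j + 1) - 1) := by
            rw [ihj, hfac, hpow, pow_add]; ring
end
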